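/- For all integers N ≥ 2, K ≥ 1 and every i with 1 ≤ i ≤ N−1, ∑_{k=0}^{N−2} (1/binom(N−2,k)) · ∑_{m=0}^{min(K−1,k)} binom(i−1,m)·binom(N−i−1,k−m) = min(K,i)·(N−1)/i. -/

import Mathlib

open Finset

/-- Disjoint-choice symmetry: `C(n,a)·C(n−a,k) = C(n,k)·C(n−k,a)` for `a,k ≤ n`. -/
lemma choose_sub_choose_symm {n a k : ℕ} (ha : a ≤ n) (hk : k ≤ n) :
    n.choose a * (n - a).choose k = n.choose k * (n - k).choose a := by
  rcases le_or_gt (a + k) n with h | h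
  · have h1 := Nat.choose_mul (n := n) (show a ≤ a + k by omega)
    have h2 := Nat.choose_mul (n := n) (show k ≤ a + k by omega)
    rw [Nat.add_sub_cancel_left] at h1
    rw [Nat.add_sub_cancel] at h2
    have h3 : (a + k).choose a = (a + k).choose k := Nat.choose_symm_add
    rw [← h1, ← h2, h3]
  · rw [Nat.choose_eq_zero_of_lt (show n - a < k by omega),
      Nat.choose_eq_zero_of_lt (show n - k < a by omega), Nat.mul_zero, Nat.mul_zero]

/-- Rewriting identity: `C(n,a)·C(a,m)·C(n−a,k−m) = C(n,k)·C(k,m)·C(n−k,a−m)`. -/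
lemma lemA {n a k m : ℕ} (ha : a ≤ n) (hk : k ≤ n) (hm : m ≤ a) (hmk : m ≤ k) :
    n.choose a * (a.choose m * (n - a).choose (k - m)) =
      n.choose k * (k.choose m * (n - k).choose (a - m)) := by
  have e1 : n.choose a * a.choose m = n.choose m * (n - m).choose (a - m) :=
    Nat.choose_mul hm
  have e2 : n.choose k * k.choose m = n.choose m * (n - m).choose (k - m) :=
    Nat.choose_mul hmk
  have key := choose_sub_choose_symm (show a - m ≤ n - m by omega) (show k - m ≤ n - m by omega)
  rw [show n - m - (a - m) = n - a by omega, show n - m - (k - m) = n - k by omega] at key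
  calc n.choose a * (a.choose m * (n - a).choose (k - m))
      = (n.choose a * a.choose m) * (n - a).choose (k - m) := by ring
    _ = n.choose m * ((n - m).choose (a - m) * (n - a).choose (k - m)) := by rw [e1]; ring
    _ = n.choose m * ((n - m).choose (k - m) * (n - k).choose (a - m)) := by rw [key]
    _ = (n.choose k * k.choose m) * (n - k).choose (a - m) := by rw [e2]; ring
    _ = n.choose k * (k.choose m * (n - k).choose (a - m)) := by ring

/-- Vandermonde-type: `∑_{k=0}^n C(k,m)·C(n−k,j) = C(n+1, m+j+1)`. -/
lemma lemB : ∀ (j n m : ℕ),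
    ∑ k ∈ range (n + 1), k.choose m * (n - k).choose j = (n + 1).choose (m + j + 1) := by
  intro j
  induction j with
  | zero =>
    intro n m
    simp only [Nat.choose_zero_right, Nat.mul_one, Nat.add_zero]
    rw [show range (n + 1) = Icc 0 n by rw [range_eq_Ico, ← Finset.Ico_add_one_right_eq_Icc],
      ← Nat.sum_Icc_choose n m]
    refine (Finset.sum_subset (fun x hx => ?_) (fun x hx hx' => ?_)).symm
    · simp only [mem_Icc] at hx ⊢; omega
    · simp only [mem_Icc] at hx hx'
      exact Nat.choose_eq_zero_of_lt (by omega)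
  | succ j ihj =>
    intro n m
    induction n with
    | zero =>
      simp [Nat.choose_eq_zero_of_lt (show 1 < m + (j + 1) + 1 by omega),
        Nat.choose_eq_zero_of_lt (show 0 < j + 1 by omega)]
    | succ n ihn =>
      rw [Finset.sum_range_succ]
      have step : ∀ k ∈ range (n + 1),
          k.choose m * (n + 1 - k).choose (j + 1) =
            k.choose m * (n - k).choose j + k.choose m * (n - k).choose (j + 1) := by
        intro k hk
        simp only [mem_range] at hk
        rw [show n + 1 - k = (n - k) + 1 by omega, Nat.choose_succ_succ' (n - k) j,
          Nat.mul_add]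
      rw [Finset.sum_congr rfl step, Finset.sum_add_distrib, ihn, ihj n m,
        Nat.sub_self, Nat.choose_eq_zero_of_lt (show 0 < j + 1 by omega), Nat.mul_zero,
        Nat.add_zero]
      rw [show m + (j + 1) + 1 = (m + j + 1) + 1 from rfl, Nat.choose_succ_succ' (n + 1)]

/-- Per-`m` sum over `k`. -/
lemma perm (n a m : ℕ) (ha : a ≤ n) :
    ∑ k ∈ range (n + 1),
        (if m ≤ k then (1 / (n.choose k : ℝ)) * ((a.choose m : ℝ) * ((n - a).choose (k - m) : ℝ))
          else 0) =
      if m ≤ a then ((n : ℝ) + 1) / ((a : ℝ) + 1) else 0 := by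
  by_cases hma : m ≤ a
  · rw [if_pos hma]
    have hca : (0 : ℝ) < (n.choose a : ℝ) := by exact_mod_cast Nat.choose_pos ha
    have step : ∀ k ∈ range (n + 1),
        (if m ≤ k then (1 / (n.choose k : ℝ)) * ((a.choose m : ℝ) * ((n - a).choose (k - m) : ℝ))
          else 0) = ((k.choose m * (n - k).choose (a - m) : ℕ) : ℝ) / ((n.choose a : ℕ) : ℝ) := by
      intro k hk
      simp only [mem_range] at hk
      have hkn : k ≤ n := by omega
      have hck : (0 : ℝ) < (n.choose k : ℝ) := by exact_mod_cast Nat.choose_pos hkn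
      by_cases hmk : m ≤ k
      · rw [if_pos hmk]
        have hcast : ((n.choose a : ℕ) : ℝ) * ((a.choose m : ℝ) * ((n - a).choose (k - m) : ℝ)) =
            ((n.choose k : ℕ) : ℝ) * (((k.choose m * (n - k).choose (a - m) : ℕ)) : ℝ) := by
          exact_mod_cast congrArg (fun x : ℕ => (x : ℝ)) (lemA ha hkn hma hmk)
        rw [one_div, inv_mul_eq_div, div_eq_div_iff hck.ne' hca.ne']
        linarith [hcast]
      · rw [if_neg hmk, Nat.choose_eq_zero_of_lt (show k < m by omega)]
        simp
    rw [Finset.sum_congr rfl step, ← Finset.sum_div, ← Nat.cast_sum,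
      lemB (a - m) n m, show m + (a - m) + 1 = a + 1 by omega]
    have hcast : ((n + 1 : ℕ) : ℝ) * (n.choose a : ℝ) =
        ((n + 1).choose (a + 1) : ℝ) * ((a + 1 : ℕ) : ℝ) := by
      exact_mod_cast congrArg (fun x : ℕ => (x : ℝ)) (Nat.add_one_mul_choose_eq n a)
    push_cast at hcast ⊢
    rw [div_eq_div_iff hca.ne' (by positivity : ((a : ℝ) + 1) ≠ 0)]
    linarith [hcast]
  · rw [if_neg hma]
    apply Finset.sum_eq_zero
    intro k hk
    rw [Nat.choose_eq_zero_of_lt (show a < m by omega)]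
    simp

theorem binom_double_sum (N K i : ℕ) (hN : 2 ≤ N) (hK : 1 ≤ K)
    (hi1 : 1 ≤ i) (hi2 : i ≤ N - 1) :
    ∑ k ∈ Finset.range (N - 1), (1 / ((N - 2).choose k : ℝ)) *
        ∑ m ∈ Finset.range (min (K - 1) k + 1),
          ((i - 1).choose m : ℝ) * ((N - i - 1).choose (k - m) : ℝ) =
      min (K : ℝ) (i : ℝ) * ((N : ℝ) - 1) / (i : ℝ) := by
  obtain ⟨n, rfl⟩ : ∃ n, N = n + 2 := ⟨N - 2, by omega⟩
  obtain ⟨a, rfl⟩ : ∃ a, i = a + 1 := ⟨i - 1, by omega⟩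
  have ha : a ≤ n := by omega
  rw [show n + 2 - 1 = n + 1 by omega, show n + 2 - 2 = n by omega,
    show a + 1 - 1 = a by omega]
  have h4 : ∀ k m : ℕ, ((n + 2 - (a + 1) - 1).choose (k - m) : ℝ) =
      ((n - a).choose (k - m) : ℝ) := by
    intro k m; rw [show n + 2 - (a + 1) - 1 = n - a by omega]
  simp only [h4]
  -- Step 1: rewrite inner sum as a sum over range K with an indicator
  have step1 : ∀ k, ∑ m ∈ Finset.range (min (K - 1) k + 1),
      ((a.choose m : ℝ) * ((n - a).choose (k - m) : ℝ)) =
      ∑ m ∈ Finset.range K,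
        (if m ≤ k then (a.choose m : ℝ) * ((n - a).choose (k - m) : ℝ) else 0) := by
    intro k
    rw [Finset.sum_congr rfl
      (fun m hm => (if_pos (show m ≤ k by simp only [mem_range] at hm; omega)).symm)]
    exact Finset.sum_subset
      (fun m hm => by simp only [mem_range] at hm ⊢; omega)
      (fun m hm hm' => if_neg (by simp only [mem_range] at hm hm'; omega))
  rw [Finset.sum_congr rfl (fun k _ => by rw [step1 k, Finset.mul_sum])]
  have step2 : ∀ k ∈ range (n + 1), ∀ m ∈ range K,
      (1 / ((n.choose k : ℕ) : ℝ)) *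
        (if m ≤ k then (a.choose m : ℝ) * ((n - a).choose (k - m) : ℝ) else 0) =
      (if m ≤ k then (1 / (n.choose k : ℝ)) * ((a.choose m : ℝ) * ((n - a).choose (k - m) : ℝ))
        else 0) := by
    intro k _ m _
    by_cases hmk : m ≤ k
    · rw [if_pos hmk, if_pos hmk]
    · rw [if_neg hmk, if_neg hmk, mul_zero]
  rw [Finset.sum_congr rfl (fun k hk => Finset.sum_congr rfl (step2 k hk))]
  rw [Finset.sum_comm]
  rw [Finset.sum_congr rfl (fun m _ => perm n a m ha)]
  -- Step 3: evaluate the outer sum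
  have step3 : ∑ m ∈ range K, (if m ≤ a then ((n : ℝ) + 1) / ((a : ℝ) + 1) else 0) =
      ((min K (a + 1) : ℕ) : ℝ) * (((n : ℝ) + 1) / ((a : ℝ) + 1)) := by
    rw [← Finset.sum_subset (s₁ := range (min K (a + 1)))
        (fun m hm => by simp only [mem_range] at hm ⊢; omega)
        (fun m hm hm' => if_neg (by simp only [mem_range] at hm hm'; omega))]
    rw [Finset.sum_congr rfl (fun m hm => if_pos (by simp only [mem_range] at hm; omega)),
      Finset.sum_const, card_range, nsmul_eq_mul]
  rw [step3]
  have hmin : ((min K (a + 1) : ℕ) : ℝ) = min (K : ℝ) ((a : ℝ) + 1) := by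
    push_cast [Nat.cast_min]; ring_nf
  rw [hmin]
  push_cast
  ring
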